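/- The class of admissible sequences is stable under cyclic shifts: if (a₁,…,aₙ) is admissible, then (a₂,…,aₙ,a₁) is admissible. -/

import Mathlib

/-- The `m`-th elementary augmentation (for `1 ≤ m ≤ n + 1`, `n = l.length`):
insert `-1` at position `m - 1` and subtract `1` from the two (cyclically) adjacent
entries of the original sequence, i.e. at indices `(m + n - 2) % n` and `(m - 1) % n`.
This reproduces:
`augm₁(a₁,…,aₙ) = (-1, a₁-1, a₂, …, a_{n-1}, aₙ-1)`,
`augmₘ(a₁,…,aₙ) = (a₁, …, a_{m-2}, a_{m-1}-1, -1, aₘ-1, a_{m+1}, …, aₙ)` for `2 ≤ m ≤ n`,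
`augm_{n+1}(a₁,…,aₙ) = (a₁-1, a₂, …, aₙ-1, -1)`. -/
def augm (m : ℕ) (l : List ℤ) : List ℤ :=
  List.insertIdx
    (List.modify
      (List.modify l ((m + l.length - 2) % l.length) (· - 1))
      ((m - 1) % l.length) (· - 1))
    (m - 1) (-1)

/-- A sequence of integers is admissible if it can be obtained from `(0, k, 0, -k)` or
`(k, 0, -k, 0)` for some `k ∈ ℤ` by finitely many elementary augmentations. -/
inductive Admissible : List ℤ → Prop
  | base₁ (k : ℤ) : Admissible [0, k, 0, -k]
  | base₂ (k : ℤ) : Admissible [k, 0, -k, 0]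
  | aug (m : ℕ) (l : List ℤ) (h₁ : 1 ≤ m) (h₂ : m ≤ l.length + 1)
      (hl : Admissible l) : Admissible (augm m l)

lemma augm_length (m : ℕ) (l : List ℤ) (h₂ : m ≤ l.length + 1) :
    (augm m l).length = l.length + 1 := by
  unfold augm
  rw [List.length_insertIdx] <;> simp <;> omega

lemma augm_eq_of_le (m : ℕ) (l : List ℤ) (h1 : 2 ≤ m) (h2 : m ≤ l.length) :
    augm m l = List.insertIdx
      (List.modify (List.modify l (m - 2) (· - 1)) (m - 1) (· - 1)) (m - 1) (-1) := by
  unfold augm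
  rw [Nat.mod_eq_of_lt (a := m - 1) (by omega), Nat.mod_eq_sub_mod (a := m + l.length - 2) (by omega),
    show m + l.length - 2 - l.length = m - 2 by omega, Nat.mod_eq_of_lt (by omega)]

lemma augm_one (l : List ℤ) (h : 1 ≤ l.length) :
    augm 1 l = -1 :: (List.modify (List.modify l (l.length - 1) (· - 1)) 0 (· - 1)) := by
  unfold augm
  rw [show (1:ℕ) - 1 = 0 from rfl, Nat.zero_mod,
    show 1 + l.length - 2 = l.length - 1 by omega, Nat.mod_eq_of_lt (by omega)]
  rfl

lemma augm_top' (l : List ℤ) (h : 1 ≤ l.length) :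
    augm (l.length + 1) l = List.insertIdx
      (List.modify (List.modify l (l.length - 1) (· - 1)) 0 (· - 1)) l.length (-1) := by
  unfold augm
  rw [show l.length + 1 - 1 = l.length by omega, Nat.mod_self,
    show l.length + 1 + l.length - 2 = l.length + (l.length - 1) by omega,
    Nat.add_mod_left, Nat.mod_eq_of_lt (by omega)]

set_option maxHeartbeats 1000000 in
lemma rotate_augm_one (l : List ℤ) (h : 1 ≤ l.length) :
    (augm 1 l).rotate 1 = augm (l.length + 1) l := by
  rw [augm_one l h, augm_top' l h, List.rotate_cons_succ, List.rotate_zero]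
  have hlen : (List.modify (List.modify l (l.length - 1) (· - 1)) 0 (· - 1 : ℤ → ℤ)).length
      = l.length := by simp
  have h5 := List.insertIdx_length_self
    (l := List.modify (List.modify l (l.length - 1) (· - 1)) 0 (· - 1 : ℤ → ℤ)) (x := -1)
  rw [hlen] at h5
  rw [h5]

lemma ins_getD (L : List ℤ) (x : ℤ) (p j : ℕ) (hp : p ≤ L.length) (hj : j ≤ L.length) :
    (List.insertIdx L p x).getD j 0 =
      if j < p then L.getD j 0 else if j = p then x else L.getD (j - 1) 0 := by
  have hlen : (List.insertIdx L p x).length = L.length + 1 := by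
    rw [List.length_insertIdx, if_pos hp]
  split_ifs with h1 h2
  · rw [List.getD_eq_getElem _ _ (by omega), List.getD_eq_getElem _ _ (by omega)]
    exact List.getElem_insertIdx_of_lt h1 (by omega)
  · subst h2
    rw [List.getD_eq_getElem _ _ (by omega)]
    exact List.getElem_insertIdx_self (by omega)
  · obtain ⟨k, rfl⟩ : ∃ k, j = p + k + 1 := ⟨j - p - 1, by omega⟩
    rw [List.getD_eq_getElem _ _ (by omega), List.getD_eq_getElem _ _ (by omega)]
    rw [List.getElem_insertIdx_add_succ L x p k (by omega)]
    simp

lemma modify_getD (f : ℤ → ℤ) (L : List ℤ) (p j : ℕ) (hp : p < L.length) :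
    (List.modify L p f).getD j 0 = if p = j then f (L.getD j 0) else L.getD j 0 := by
  rcases Nat.lt_or_ge j L.length with h | h
  · rw [List.getD_eq_getElem _ _ (by simpa using h), List.getElem_modify]
    split_ifs <;> rw [List.getD_eq_getElem _ _ h]
  · rw [List.getD_eq_default _ _ (by simpa using h), if_neg (by omega),
      List.getD_eq_default _ _ h]

lemma rotate_getD (L : List ℤ) (k j : ℕ) (hj : j < L.length) :
    (L.rotate k).getD j 0 = L.getD ((j + k) % L.length) 0 := by
  rw [List.getD_eq_getElem _ _ (by simpa using hj),
    List.getD_eq_getElem _ _ (Nat.mod_lt _ (by omega)), List.getElem_rotate]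

lemma rot1_getD (l : List ℤ) (hn : 1 ≤ l.length) (j : ℕ) :
    (l.rotate 1).getD j 0 =
      if j = l.length - 1 then l.getD 0 0 else l.getD (j + 1) 0 := by
  rcases Nat.lt_or_ge j l.length with h | h
  · rw [rotate_getD l 1 j h]
    split_ifs with he
    · rw [show (j + 1) % l.length = 0 by rw [he, Nat.sub_add_cancel hn, Nat.mod_self]]
    · rw [Nat.mod_eq_of_lt (by omega)]
  · rw [List.getD_eq_default _ _ (by simpa using h), if_neg (by omega),
      List.getD_eq_default _ _ (by omega)]

/-- getD description of `augm m l` for `2 ≤ m ≤ n`. -/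
lemma getD_augm_mid (l : List ℤ) (m : ℕ) (h1 : 2 ≤ m) (h2 : m ≤ l.length) (j : ℕ)
    (hj : j ≤ l.length) :
    (augm m l).getD j 0 =
      if j < m - 1 then (if j = m - 2 then l.getD j 0 - 1 else l.getD j 0)
      else if j = m - 1 then -1
      else if j = m then l.getD (j - 1) 0 - 1 else l.getD (j - 1) 0 := by
  rw [augm_eq_of_le m l h1 h2,
    ins_getD _ _ _ _ (by simp; omega) (by simp; omega),
    modify_getD _ _ _ _ (by simp; omega), modify_getD _ _ _ _ (by omega),
    modify_getD _ _ _ _ (by simp; omega), modify_getD _ _ _ _ (by omega)]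
  split_ifs <;> first | rfl | omega | (simp_all; try omega) | (congr 1 <;> omega) | (congr 2 <;> omega) | (simp_all; try omega)

/-- getD description of `augm 1 l`. -/
lemma getD_augm_one (l : List ℤ) (hn : 2 ≤ l.length) (j : ℕ) :
    (augm 1 l).getD j 0 =
      if j = 0 then -1
      else if j = 1 then l.getD 0 0 - 1
      else if j = l.length then l.getD (l.length - 1) 0 - 1
      else l.getD (j - 1) 0 := by
  rw [augm_one l (by omega)]
  rcases Nat.eq_zero_or_pos j with rfl | hj
  · rfl
  · obtain ⟨k, rfl⟩ : ∃ k, j = k + 1 := ⟨j - 1, by omega⟩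
    rw [List.getD_cons_succ,
      modify_getD _ _ _ _ (by simp; omega), modify_getD _ _ _ _ (by omega)]
    simp only [Nat.add_sub_cancel]
    rcases Nat.lt_or_ge k l.length with h | h
    · split_ifs <;> first | rfl | omega | (simp_all; try omega) | (congr 1 <;> omega) | (congr 2 <;> omega)
    · rw [List.getD_eq_default _ _ h]
      split_ifs <;> first | rfl | omega | (simp_all; try omega) | (congr 1 <;> omega) | (congr 2 <;> omega)

/-- getD description of `augm (n+1) l`. -/
lemma getD_augm_top (l : List ℤ) (hn : 2 ≤ l.length) (j : ℕ) (hj : j ≤ l.length) :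
    (augm (l.length + 1) l).getD j 0 =
      if j = l.length then -1
      else if j = 0 then l.getD 0 0 - 1
      else if j = l.length - 1 then l.getD (l.length - 1) 0 - 1
      else l.getD j 0 := by
  rw [augm_top' l (by omega),
    ins_getD _ _ _ _ (by simp) (by simp; omega),
    modify_getD _ _ _ _ (by simp; omega), modify_getD _ _ _ _ (by omega)]
  split_ifs <;> first | rfl | omega | (subst_vars; rfl) | (simp_all; try omega) | (congr 1 <;> omega) | (congr 2 <;> omega)

set_option maxHeartbeats 1000000 in
lemma rotate_augm (l : List ℤ) (hn : 2 ≤ l.length) (m : ℕ) (h1 : 2 ≤ m)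
    (h2 : m ≤ l.length + 1) :
    (augm m l).rotate 1 = augm (m - 1) (l.rotate 1) := by
  have hrl : (l.rotate 1).length = l.length := List.length_rotate l 1
  apply List.ext_getElem
  · rw [List.length_rotate, augm_length m l h2, augm_length _ _ (by omega), hrl]
  intro i hi1 hi2
  have hi : i < l.length + 1 := by
    rw [List.length_rotate, augm_length m l h2] at hi1; omega
  rw [show ((augm m l).rotate 1)[i] = ((augm m l).rotate 1).getD i 0 from
      (List.getD_eq_getElem _ _ hi1).symm,
    show (augm (m - 1) (l.rotate 1))[i] = (augm (m - 1) (l.rotate 1)).getD i 0 from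
      (List.getD_eq_getElem _ _ hi2).symm,
    rotate_getD _ 1 i (by rw [augm_length m l h2]; omega), augm_length m l h2]
  have hmod : (i + 1) % (l.length + 1) = if i = l.length then 0 else i + 1 := by
    split_ifs with h
    · rw [h, Nat.mod_self]
    · exact Nat.mod_eq_of_lt (by omega)
  rw [hmod]
  rcases Nat.lt_or_ge m (l.length + 1) with hm | hm
  · -- 2 ≤ m ≤ n : both sides "mid" (or RHS "one" when m = 2)
    rcases eq_or_lt_of_le h1 with hm2 | hm3
    · -- m = 2
      subst hm2
      rw [show (2:ℕ) - 1 = 1 from rfl, getD_augm_one (l.rotate 1) (by omega)]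
      by_cases hio : i = l.length
      · rw [if_pos hio, getD_augm_mid l 2 (by omega) (by omega) 0 (by omega)]
        simp only [rot1_getD l (by omega), hrl]
        split_ifs <;> first | rfl | omega | (congr 1 <;> omega) | (congr 2 <;> omega)
      · rw [if_neg hio, getD_augm_mid l 2 (by omega) (by omega) (i + 1) (by omega)]
        simp only [rot1_getD l (by omega), hrl, Nat.add_sub_cancel]
        split_ifs <;> first | rfl | omega | (congr 1 <;> omega) | (congr 2 <;> omega)
    · -- 3 ≤ m ≤ n
      rw [getD_augm_mid (l.rotate 1) (m - 1) (by omega) (by omega) i (by omega)]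
      simp only [rot1_getD l (by omega), hrl]
      by_cases hio : i = l.length
      · rw [if_pos hio, getD_augm_mid l m h1 (by omega) 0 (by omega)]
        split_ifs <;> first | rfl | omega | (congr 1 <;> omega) | (congr 2 <;> omega)
      · rw [if_neg hio, getD_augm_mid l m h1 (by omega) (i + 1) (by omega)]
        simp only [Nat.add_sub_cancel]
        split_ifs <;> first | rfl | omega | (congr 1 <;> omega) | (congr 2 <;> omega)
  · -- m = n + 1
    have hmeq : m = l.length + 1 := by omega
    subst hmeq
    rw [show l.length + 1 - 1 = l.length from by omega,
      getD_augm_mid (l.rotate 1) l.length (by omega) (by omega) i (by omega)]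
    simp only [rot1_getD l (by omega), hrl]
    by_cases hio : i = l.length
    · rw [if_pos hio, getD_augm_top l hn 0 (by omega)]
      split_ifs <;> first | rfl | omega | (congr 1 <;> omega) | (congr 2 <;> omega)
    · rw [if_neg hio, getD_augm_top l hn (i + 1) (by omega)]
      try simp only [Nat.add_sub_cancel]
      split_ifs <;> first | rfl | omega | (congr 1 <;> omega) | (congr 2 <;> omega) | (exfalso; assumption)

lemma Admissible.four_le_length {l : List ℤ} (hl : Admissible l) : 4 ≤ l.length := by
  induction hl with
  | base₁ k => simp
  | base₂ k => simp
  | aug m l h1 h2 hl ih => rw [augm_length m l h2]; omega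

/-- Admissible sequences are stable under cyclic shifts: if `(a₁, …, aₙ)`
is admissible, then so is `(a₂, …, aₙ, a₁)`. -/
theorem Admissible.rotate (l : List ℤ) (hl : Admissible l) :
    Admissible (l.rotate 1) := by
  induction hl with
  | base₁ k =>
      rw [show ([0, k, 0, -k] : List ℤ).rotate 1 = [k, 0, -k, 0] from rfl]
      exact Admissible.base₂ k
  | base₂ k =>
      have h : ([k, 0, -k, 0] : List ℤ).rotate 1 = [0, -k, 0, -(-k)] := by
        simp [List.rotate]
      rw [h]
      exact Admissible.base₁ (-k)
  | aug m l h1 h2 hl ih =>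
      have hlen : 4 ≤ l.length := hl.four_le_length
      rcases Nat.eq_or_lt_of_le h1 with hm1 | hm2
      · rw [← hm1, rotate_augm_one l (by omega)]
        exact Admissible.aug (l.length + 1) l (by omega) (by omega) hl
      · rw [rotate_augm l (by omega) m (by omega) h2]
        exact Admissible.aug (m - 1) (l.rotate 1) (by omega)
          (by rw [List.length_rotate]; omega) ih
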